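/- Let 𝒫 be a converting vector set from ρ to σ, let {μ_i}_{i∈[q]} and {ν_i}_{i∈[q]} be unit vectors in ℂ^q satisfying ⟨μ_i|ν_j⟩ = (q/(2(q−1)))·(1 − δ_{ij}) for all i, j ∈ [q], let x ∈ X, let ε̂ > 0, and let α > 0 satisfy α ≥ w_−(𝒫, x). Then ‖P_0(U(𝒫, x, α, ε̂)) |t_{x+}⟩‖² ≥ 1/(1 + ε̂) ≥ 1 − ε̂. -/

import Mathlib

noncomputable section

open Finset

variable {q n m : ℕ} {𝓗 : Type*} [NormedAddCommGroup 𝓗] [InnerProductSpace ℂ 𝓗]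

/-- `(u, v)` is a converting vector set from `ρ` to `σ` (relative to `X`):
for all `x, y ∈ X`, `⟨ρ_x|ρ_y⟩ − ⟨σ_x|σ_y⟩ = Σ_{j : x_j ≠ y_j} ⟨u_{xj}|v_{yj}⟩`. -/
def IsCVS (X : Finset (Fin n → Fin q)) (ρ σ : (Fin n → Fin q) → 𝓗)
    (u v : (Fin n → Fin q) → Fin n → EuclideanSpace ℂ (Fin m)) : Prop :=
  ∀ x ∈ X, ∀ y ∈ X,
    (inner ℂ (ρ x) (ρ y) : ℂ) - (inner ℂ (σ x) (σ y) : ℂ) =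
      ∑ j ∈ Finset.univ.filter (fun j => x j ≠ y j), (inner ℂ (u x j) (v y j) : ℂ)

/-- witness size of a family of vectors: `Σ_j ‖u_{xj}‖²`. -/
def wSize (u : (Fin n → Fin q) → Fin n → EuclideanSpace ℂ (Fin m))
    (x : Fin n → Fin q) : ℝ :=
  ∑ j : Fin n, ‖u x j‖ ^ 2

/-- The space `(ℂ²⊗𝒣) ⊕ (ℂⁿ⊗ℂ^q⊗ℂ^m)`, realized as the `L²` direct sum of
`𝒣 ⊕ 𝒣` (the two components of `ℂ²⊗𝒣`) and `n` copies of `ℂ^{q×m}`. -/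
abbrev BigSpace (𝓗 : Type*) [NormedAddCommGroup 𝓗] [InnerProductSpace ℂ 𝓗]
    (q n m : ℕ) : Type _ :=
  WithLp 2 ((PiLp 2 fun _ : Fin 2 => 𝓗) ×
    (PiLp 2 fun _ : Fin n => EuclideanSpace ℂ (Fin q × Fin m)))

/-- build an element of `BigSpace` from its two components. -/
def mkBig (a : PiLp 2 fun _ : Fin 2 => 𝓗)
    (g : PiLp 2 fun _ : Fin n => EuclideanSpace ℂ (Fin q × Fin m)) :
    BigSpace 𝓗 q n m :=
  (WithLp.equiv 2 _).symm (a, g)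

/-- `|0⟩a + |1⟩b ∈ ℂ²⊗𝒣`. -/
def mk2 (a b : 𝓗) : PiLp 2 fun _ : Fin 2 => 𝓗 :=
  (WithLp.equiv 2 _).symm (fun i => if i = 0 then a else b)

/-- build an element of `ℂⁿ⊗ℂ^q⊗ℂ^m` from its components. -/
def mkPi (g : Fin n → EuclideanSpace ℂ (Fin q × Fin m)) :
    PiLp 2 fun _ : Fin n => EuclideanSpace ℂ (Fin q × Fin m) :=
  (WithLp.equiv 2 _).symm g

/-- the pure tensor `ν ⊗ w ∈ ℂ^q ⊗ ℂ^m`. -/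
def tens (ν : EuclideanSpace ℂ (Fin q)) (w : EuclideanSpace ℂ (Fin m)) :
    EuclideanSpace ℂ (Fin q × Fin m) :=
  (WithLp.equiv 2 _).symm fun p => ν p.1 * w p.2

/-- `|t_{x+}⟩ = (1/√2)(|0⟩|ρ_x⟩ + |1⟩|σ_x⟩)`. -/
def tPlus (ρ σ : (Fin n → Fin q) → 𝓗) (x : Fin n → Fin q) :
    BigSpace 𝓗 q n m :=
  mkBig (mk2 ((((Real.sqrt 2 : ℝ) : ℂ))⁻¹ • ρ x) ((((Real.sqrt 2 : ℝ) : ℂ))⁻¹ • σ x)) 0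

/-- `|t_{x−}⟩ = (1/√2)(|0⟩|ρ_x⟩ − |1⟩|σ_x⟩)`. -/
def tMinus (ρ σ : (Fin n → Fin q) → 𝓗) (x : Fin n → Fin q) :
    BigSpace 𝓗 q n m :=
  mkBig (mk2 ((((Real.sqrt 2 : ℝ) : ℂ))⁻¹ • ρ x) (-((((Real.sqrt 2 : ℝ) : ℂ))⁻¹ • σ x))) 0

/-- `|ψ_{x,α,ε̂}⟩ = √(ε̂/α)|t_{x−}⟩ − Σ_j |j⟩|μ_{x_j}⟩|u_{xj}⟩`. -/
def psi (ρ σ : (Fin n → Fin q) → 𝓗)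
    (u : (Fin n → Fin q) → Fin n → EuclideanSpace ℂ (Fin m))
    (μ : Fin q → EuclideanSpace ℂ (Fin q)) (α εh : ℝ) (x : Fin n → Fin q) :
    BigSpace 𝓗 q n m :=
  (((Real.sqrt (εh / α) : ℝ) : ℂ)) • tMinus ρ σ x -
    mkBig 0 (mkPi fun j => tens (μ (x j)) (u x j))

/-- `⟨ν| ⊗ I : ℂ^q ⊗ ℂ^m → ℂ^m`, contraction of the first tensor factor with `ν`. -/
def contractL (ν : EuclideanSpace ℂ (Fin q)) :
    EuclideanSpace ℂ (Fin q × Fin m) →ₗ[ℂ] EuclideanSpace ℂ (Fin m) :=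
  (WithLp.linearEquiv 2 ℂ (Fin m → ℂ)).symm.toLinearMap ∘ₗ
    LinearMap.pi fun k => (innerSL ℂ (tens ν (EuclideanSpace.single k 1))).toLinearMap

/-- `|ν⟩ ⊗ I : ℂ^m → ℂ^q ⊗ ℂ^m`, tensoring with `ν`. -/
def tensL (ν : EuclideanSpace ℂ (Fin q)) :
    EuclideanSpace ℂ (Fin m) →ₗ[ℂ] EuclideanSpace ℂ (Fin q × Fin m) :=
  (WithLp.linearEquiv 2 ℂ (Fin q × Fin m → ℂ)).symm.toLinearMap ∘ₗ
    LinearMap.pi fun p : Fin q × Fin m =>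
      ν p.1 • (LinearMap.proj p.2 ∘ₗ (WithLp.linearEquiv 2 ℂ (Fin m → ℂ)).toLinearMap)

/-- `|ν⟩⟨ν| ⊗ I` on `ℂ^q ⊗ ℂ^m`. -/
def projMu (ν : EuclideanSpace ℂ (Fin q)) :
    EuclideanSpace ℂ (Fin q × Fin m) →ₗ[ℂ] EuclideanSpace ℂ (Fin q × Fin m) :=
  tensL ν ∘ₗ contractL ν

/-- `Σ_j |j⟩⟨j| ⊗ |μ_{x_j}⟩⟨μ_{x_j}| ⊗ I` on `ℂⁿ⊗ℂ^q⊗ℂ^m`. -/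
def sumProjMu (μ : Fin q → EuclideanSpace ℂ (Fin q)) (x : Fin n → Fin q) :
    (PiLp 2 fun _ : Fin n => EuclideanSpace ℂ (Fin q × Fin m)) →ₗ[ℂ]
      (PiLp 2 fun _ : Fin n => EuclideanSpace ℂ (Fin q × Fin m)) :=
  (WithLp.linearEquiv 2 ℂ (∀ _ : Fin n, EuclideanSpace ℂ (Fin q × Fin m))).symm.toLinearMap ∘ₗ
    (LinearMap.pi fun j => projMu (μ (x j)) ∘ₗ LinearMap.proj j) ∘ₗ
    (WithLp.linearEquiv 2 ℂ (∀ _ : Fin n, EuclideanSpace ℂ (Fin q × Fin m))).toLinearMap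

/-- the canonical linear identification of `BigSpace` with the product. -/
def bigEquiv (𝓗 : Type*) [NormedAddCommGroup 𝓗] [InnerProductSpace ℂ 𝓗] (q n m : ℕ) :
    BigSpace 𝓗 q n m ≃ₗ[ℂ]
      (PiLp 2 fun _ : Fin 2 => 𝓗) ×
        (PiLp 2 fun _ : Fin n => EuclideanSpace ℂ (Fin q × Fin m)) :=
  WithLp.linearEquiv 2 ℂ _

/-- `Π_x = I − Σ_j |j⟩⟨j| ⊗ |μ_{x_j}⟩⟨μ_{x_j}| ⊗ I` on `(ℂ²⊗𝒣) ⊕ (ℂⁿ⊗ℂ^q⊗ℂ^m)`. -/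
def PiX (μ : Fin q → EuclideanSpace ℂ (Fin q)) (x : Fin n → Fin q) :
    BigSpace 𝓗 q n m →ₗ[ℂ] BigSpace 𝓗 q n m :=
  LinearMap.id -
    (bigEquiv 𝓗 q n m).symm.toLinearMap ∘ₗ
      (LinearMap.prodMap 0 (sumProjMu μ x)) ∘ₗ (bigEquiv 𝓗 q n m).toLinearMap

/-- orthogonal projection onto a submodule, as an endomorphism. -/
def projL {K : Type*} [NormedAddCommGroup K] [InnerProductSpace ℂ K] [FiniteDimensional ℂ K]
    (S : Submodule ℂ K) : K →ₗ[ℂ] K :=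
  S.subtype ∘ₗ (S.orthogonalProjectionOnto).toLinearMap

/-- `Λ^{α,ε̂}`: the orthogonal projection onto the orthogonal complement of
`span{|ψ_{x,α,ε̂}⟩ : x ∈ X}`. -/
def LambdaCVS [FiniteDimensional ℂ 𝓗] (X : Finset (Fin n → Fin q))
    (ρ σ : (Fin n → Fin q) → 𝓗)
    (u : (Fin n → Fin q) → Fin n → EuclideanSpace ℂ (Fin m))
    (μ : Fin q → EuclideanSpace ℂ (Fin q)) (α εh : ℝ) :
    BigSpace 𝓗 q n m →ₗ[ℂ] BigSpace 𝓗 q n m :=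
  projL ((Submodule.span ℂ ((fun x => psi ρ σ u μ α εh x) '' (X : Set (Fin n → Fin q))))ᗮ)

/-- `U(𝒫, x, α, ε̂) = (2Π_x − I)(2Λ^{α,ε̂} − I)`. -/
def Ucvs [FiniteDimensional ℂ 𝓗] (X : Finset (Fin n → Fin q))
    (ρ σ : (Fin n → Fin q) → 𝓗)
    (u : (Fin n → Fin q) → Fin n → EuclideanSpace ℂ (Fin m))
    (μ : Fin q → EuclideanSpace ℂ (Fin q)) (α εh : ℝ) (x : Fin n → Fin q) :
    BigSpace 𝓗 q n m →ₗ[ℂ] BigSpace 𝓗 q n m :=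
  (2 • PiX μ x - LinearMap.id) ∘ₗ (2 • LambdaCVS X ρ σ u μ α εh - LinearMap.id)

/-- `phaseSpace U Θ` is the span of the eigenvectors of `U` with eigenvalue `e^{iθ}`
for `|θ| ≤ Θ`; the orthogonal projection onto it is `P_Θ(U)`. -/
def phaseSpace {K : Type*} [NormedAddCommGroup K] [InnerProductSpace ℂ K]
    (U : K →ₗ[ℂ] K) (Θ : ℝ) : Submodule ℂ K :=
  ⨆ θ : Set.Icc (-Θ) Θ, Module.End.eigenspace U (Complex.exp (Complex.I * (θ : ℝ)))


lemma inner_mkBig (a a' : PiLp 2 fun _ : Fin 2 => 𝓗)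
    (g g' : PiLp 2 fun _ : Fin n => EuclideanSpace ℂ (Fin q × Fin m)) :
    (inner ℂ (mkBig a g) (mkBig a' g') : ℂ) = inner ℂ a a' + inner ℂ g g' := rfl

lemma inner_mk2 (a b a' b' : 𝓗) :
    (inner ℂ (mk2 a b) (mk2 a' b') : ℂ) = inner ℂ a a' + inner ℂ b b' := by
  simp [mk2, PiLp.inner_apply, Fin.sum_univ_two]

lemma inner_mkPi (g g' : Fin n → EuclideanSpace ℂ (Fin q × Fin m)) :
    (inner ℂ (mkPi g) (mkPi g') : ℂ) = ∑ j, inner ℂ (g j) (g' j) := by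
  simp [mkPi, PiLp.inner_apply]

lemma inner_tens (ν ν' : EuclideanSpace ℂ (Fin q)) (w w' : EuclideanSpace ℂ (Fin m)) :
    (inner ℂ (tens ν w) (tens ν' w') : ℂ) = inner ℂ ν ν' * inner ℂ w w' := by
  simp only [tens, PiLp.inner_apply, RCLike.inner_apply]
  rw [Fintype.sum_prod_type, Finset.sum_mul_sum]
  apply Finset.sum_congr rfl
  intro i _
  apply Finset.sum_congr rfl
  intro k _
  simp only [WithLp.equiv_symm_apply, PiLp.toLp_apply, map_mul]
  ring

lemma tensL_apply (ν : EuclideanSpace ℂ (Fin q)) (w : EuclideanSpace ℂ (Fin m)) :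
    tensL ν w = tens ν w := by
  ext p
  simp [tensL, tens]

lemma contractL_apply (ν : EuclideanSpace ℂ (Fin q)) (z : EuclideanSpace ℂ (Fin q × Fin m))
    (k : Fin m) :
    contractL (m := m) ν z k = (inner ℂ (tens ν (EuclideanSpace.single k 1)) z : ℂ) := rfl

lemma contractL_tens (ν ν' : EuclideanSpace ℂ (Fin q)) (w : EuclideanSpace ℂ (Fin m)) :
    contractL ν (tens ν' w) = (inner ℂ ν ν' : ℂ) • w := by
  ext k
  rw [contractL_apply, inner_tens]
  simp [EuclideanSpace.inner_single_left, PiLp.smul_apply, smul_eq_mul]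

lemma projMu_tens (μ0 ν' : EuclideanSpace ℂ (Fin q)) (w : EuclideanSpace ℂ (Fin m)) :
    projMu μ0 (tens ν' w) = (inner ℂ μ0 ν' : ℂ) • tens μ0 w := by
  simp [projMu, contractL_tens, map_smul, tensL_apply]

lemma sumProjMu_mkPi (μ : Fin q → EuclideanSpace ℂ (Fin q)) (x : Fin n → Fin q)
    (g : Fin n → EuclideanSpace ℂ (Fin q × Fin m)) :
    sumProjMu (m := m) μ x (mkPi g) = mkPi fun j => projMu (μ (x j)) (g j) := rfl

lemma PiX_mkBig (μ : Fin q → EuclideanSpace ℂ (Fin q)) (x : Fin n → Fin q)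
    (a : PiLp 2 fun _ : Fin 2 => 𝓗) (g : Fin n → EuclideanSpace ℂ (Fin q × Fin m)) :
    PiX μ x (mkBig a (mkPi g)) =
      mkBig a (mkPi g) - mkBig 0 (mkPi fun j => projMu (μ (x j)) (g j)) := rfl

lemma mkBig_zero' : mkBig (𝓗 := 𝓗) (q := q) (n := n) (m := m) 0 (mkPi fun _ => 0) = 0 := rfl

lemma projL_apply {K : Type*} [NormedAddCommGroup K] [InnerProductSpace ℂ K]
    [FiniteDimensional ℂ K] (S : Submodule ℂ K) (t : K) :
    projL S t = (S.orthogonalProjectionOnto t : K) := rfl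

lemma inner_self_c {K : Type*} [NormedAddCommGroup K] [InnerProductSpace ℂ K] (a : K) :
    (inner ℂ a a : ℂ) = (((‖a‖ : ℝ) : ℂ))^2 := by
  rw [inner_self_eq_norm_sq_to_K]; rfl

set_option maxHeartbeats 1000000 in
/-- if `α ≥ w_−(𝒫,x)` then
`‖P_0(U(𝒫,x,α,ε̂))|t_{x+}⟩‖² ≥ 1/(1+ε̂) ≥ 1 − ε̂`. -/
theorem tplus_overlap_bound (hq : 2 ≤ q) (hn : 1 ≤ n) (hm : 1 ≤ m) [FiniteDimensional ℂ 𝓗]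
    (X : Finset (Fin n → Fin q)) (ρ σ : (Fin n → Fin q) → 𝓗)
    (hρ : ∀ x ∈ X, ‖ρ x‖ = 1) (hσ : ∀ x ∈ X, ‖σ x‖ = 1)
    (u v : (Fin n → Fin q) → Fin n → EuclideanSpace ℂ (Fin m))
    (hP : IsCVS X ρ σ u v)
    (μ : Fin q → EuclideanSpace ℂ (Fin q)) (hμ : ∀ i, ‖μ i‖ = 1)
    (x : Fin n → Fin q) (hx : x ∈ X)
    (α εh : ℝ) (hα : 0 < α) (hε : 0 < εh)
    (ν : Fin q → EuclideanSpace ℂ (Fin q)) (hν : ∀ i, ‖ν i‖ = 1)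
    (hμν : ∀ i j, (inner ℂ (μ i) (ν j) : ℂ) =
      ((q : ℂ) / (2 * ((q : ℂ) - 1))) * (if i = j then 0 else 1))
    (hαw : wSize v x ≤ α) :
    1 / (1 + εh) ≤
        ‖projL (Module.End.eigenspace (Ucvs X ρ σ u μ α εh x) 1) (tPlus ρ σ x)‖ ^ 2 ∧
      1 - εh ≤ 1 / (1 + εh) := by
  have hε1 : (0:ℝ) < 1 + εh := by linarith
  refine ⟨?_, by rw [le_div_iff₀ hε1]; nlinarith [sq_nonneg εh]⟩
  have hqR : (2:ℝ) ≤ (q:ℝ) := by exact_mod_cast hq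
  have hq0 : (q:ℂ) ≠ 0 := by
    simp only [Ne, Nat.cast_eq_zero]; omega
  have hq1 : (q:ℂ) - 1 ≠ 0 := by
    rw [sub_ne_zero]
    simp only [Ne, Nat.cast_eq_one]; omega
  set c2 : ℂ := (((Real.sqrt 2 : ℝ) : ℂ))⁻¹ with hc2def
  have hc2c : (starRingEnd ℂ) c2 = c2 := by
    simp [hc2def, map_inv₀, Complex.conj_ofReal]
  have hc2sq : c2 * c2 = (2:ℂ)⁻¹ := by
    rw [hc2def, ← mul_inv, ← Complex.ofReal_mul, Real.mul_self_sqrt (by norm_num)]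
    norm_num
  set s : ℝ := Real.sqrt (εh / α) with hsdef
  set β : ℝ := s * ((q:ℝ) - 1) / q with hβdef
  have hkey : ((β:ℝ):ℂ) * ((q : ℂ) / (2 * ((q : ℂ) - 1))) = ((s:ℝ):ℂ) * (2:ℂ)⁻¹ := by
    rw [hβdef]
    push_cast
    field_simp
  set φ : BigSpace 𝓗 q n m := mkBig (mk2 (c2 • ρ x) (c2 • σ x))
      (mkPi fun j => ((β:ℝ):ℂ) • tens (ν (x j)) (v x j)) with hφdef
  have hA : (inner ℂ (mk2 (c2 • ρ x) (c2 • σ x)) (mk2 (c2 • ρ x) (c2 • σ x)) : ℂ) = 1 := by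
    rw [inner_mk2]
    simp only [inner_smul_left, inner_smul_right]
    simp only [hc2c, inner_self_c, hρ x hx, hσ x hx]
    push_cast
    linear_combination (2:ℂ) * hc2sq
  -- orthogonality to all ψ_y
  have hinner0 : ∀ y ∈ X, (inner ℂ (psi ρ σ u μ α εh y) φ : ℂ) = 0 := by
    intro y hy
    have e1 : (inner ℂ (tMinus ρ σ y) φ : ℂ)
        = (2:ℂ)⁻¹ * ((inner ℂ (ρ y) (ρ x) : ℂ) - (inner ℂ (σ y) (σ x) : ℂ)) := by
      rw [tMinus, hφdef, inner_mkBig, inner_zero_left, add_zero, inner_mk2]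
      simp only [inner_neg_left, inner_smul_left, inner_smul_right, ← hc2def, hc2c]
      linear_combination ((inner ℂ (ρ y) (ρ x) : ℂ) - (inner ℂ (σ y) (σ x) : ℂ)) * hc2sq
    have e2 : (inner ℂ (mkBig (0 : PiLp 2 fun _ : Fin 2 => 𝓗)
          (mkPi fun j => tens (μ (y j)) (u y j))) φ : ℂ)
        = ((β:ℝ):ℂ) * ((q : ℂ) / (2 * ((q : ℂ) - 1))) *
            ((inner ℂ (ρ y) (ρ x) : ℂ) - (inner ℂ (σ y) (σ x) : ℂ)) := by
      rw [hφdef, inner_mkBig, inner_mkPi, inner_zero_left, zero_add,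
        hP y hy x hx, Finset.sum_filter, Finset.mul_sum]
      apply Finset.sum_congr rfl
      intro j _
      rw [inner_smul_right, inner_tens, hμν]
      by_cases h : y j = x j
      · simp [h]
      · simp only [if_neg h, if_pos h]
        ring
    rw [psi, inner_sub_left, inner_smul_left, e1, e2, Complex.conj_ofReal, hkey]
    ring
  -- φ is fixed by Λ
  have hφorth : φ ∈ (Submodule.span ℂ
      ((fun y => psi ρ σ u μ α εh y) '' (X : Set (Fin n → Fin q))))ᗮ := by
    rw [Submodule.mem_orthogonal]
    intro w hw
    induction hw using Submodule.span_induction with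
    | mem w hw => obtain ⟨y, hy, rfl⟩ := hw; exact hinner0 y hy
    | zero => simp
    | add _ _ _ _ h1 h2 => simp [inner_add_left, h1, h2]
    | smul c _ _ h => simp [inner_smul_left, h]
  have hLam : LambdaCVS X ρ σ u μ α εh φ = φ := by
    rw [LambdaCVS, projL_apply]
    exact Submodule.starProjection_eq_self_iff.mpr hφorth
  -- φ is fixed by PiX
  have hPix : PiX μ x φ = φ := by
    rw [hφdef, PiX_mkBig]
    have hz : (fun j => projMu (μ (x j)) (((β:ℝ):ℂ) • tens (ν (x j)) (v x j)))
        = fun _ => (0 : EuclideanSpace ℂ (Fin q × Fin m)) := by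
      funext j
      rw [map_smul, projMu_tens, hμν]
      simp
    rw [hz, mkBig_zero', sub_zero]
  -- φ is fixed by U
  have hU : Ucvs X ρ σ u μ α εh x φ = φ := by
    rw [Ucvs]
    simp only [LinearMap.comp_apply, LinearMap.sub_apply, LinearMap.smul_apply,
      LinearMap.id_apply, hLam]
    have h2 : (2:ℕ) • φ - φ = φ := by rw [two_smul]; abel
    rw [h2, hPix, h2]
  have hφmem : φ ∈ Module.End.eigenspace (Ucvs X ρ σ u μ α εh x) 1 :=
    Module.End.mem_eigenspace_iff.mpr (by rw [one_smul]; exact hU)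
  -- ⟪φ, t₊⟫ = 1
  have hφt : (inner ℂ φ (tPlus ρ σ x) : ℂ) = 1 := by
    rw [hφdef, tPlus, ← hc2def, inner_mkBig, inner_zero_right, add_zero, hA]
  -- ‖φ‖² ≤ 1 + εh
  have hεα : (0:ℝ) ≤ εh / α := le_of_lt (div_pos hε hα)
  have hβsq : β^2 ≤ εh / α := by
    have hs : s^2 = εh / α := Real.sq_sqrt hεα
    have hqpos : (0:ℝ) < q := by linarith
    have h1 : (0:ℝ) ≤ ((q:ℝ) - 1) / q := div_nonneg (by linarith) (by linarith)
    have h2 : ((q:ℝ) - 1) / q ≤ 1 := by rw [div_le_one hqpos]; linarith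
    have hd2 : (((q:ℝ) - 1) / q)^2 ≤ 1 := by nlinarith
    have hβ' : β = s * (((q:ℝ) - 1) / q) := by rw [hβdef]; ring
    calc β^2 = (εh/α) * (((q:ℝ) - 1) / q)^2 := by rw [hβ', mul_pow, hs]
      _ ≤ (εh/α) * 1 := mul_le_mul_of_nonneg_left hd2 hεα
      _ = εh/α := mul_one _
  have hwnn : 0 ≤ wSize v x := Finset.sum_nonneg fun j _ => by positivity
  have hip : (inner ℂ φ φ : ℂ) = ((1 + β^2 * wSize v x : ℝ) : ℂ) := by
    rw [hφdef, inner_mkBig, inner_mkPi, hA]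
    have hterm : ∀ j, (inner ℂ (((β:ℝ):ℂ) • tens (ν (x j)) (v x j))
        (((β:ℝ):ℂ) • tens (ν (x j)) (v x j)) : ℂ) = ((β^2 * ‖v x j‖^2 : ℝ) : ℂ) := by
      intro j
      rw [inner_smul_left, inner_smul_right, Complex.conj_ofReal, inner_tens,
        inner_self_c, inner_self_c, hν]
      push_cast
      ring
    simp only [hterm]
    rw [wSize]
    push_cast
    rw [Finset.mul_sum]
  have hφn : ‖φ‖^2 ≤ 1 + εh := by
    have hns : ‖φ‖^2 = 1 + β^2 * wSize v x := by
      have h := InnerProductSpace.norm_sq_eq_re_inner (𝕜 := ℂ) φ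
      rw [hip] at h
      simpa only [RCLike.ofReal_re, RCLike.re_to_complex, Complex.ofReal_re] using h
    rw [hns]
    have hb : β^2 * wSize v x ≤ (εh / α) * α := by
      calc β^2 * wSize v x ≤ (εh/α) * wSize v x := by nlinarith
        _ ≤ (εh/α) * α := mul_le_mul_of_nonneg_left hαw hεα
    rw [div_mul_cancel₀ _ (ne_of_gt hα)] at hb
    linarith
  -- final bound
  set E := Module.End.eigenspace (Ucvs X ρ σ u μ α εh x) 1 with hEdef
  set t := tPlus (m := m) ρ σ x with htdef
  have horth : t - (E.orthogonalProjectionOnto t : BigSpace 𝓗 q n m) ∈ Eᗮ :=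
    Submodule.sub_starProjection_mem_orthogonal t
  have hzero : (inner ℂ φ (t - (E.orthogonalProjectionOnto t : BigSpace 𝓗 q n m)) : ℂ) = 0 :=
    (Submodule.mem_orthogonal E _).mp horth φ hφmem
  have hPt : (inner ℂ φ ((E.orthogonalProjectionOnto t : BigSpace 𝓗 q n m)) : ℂ) = 1 := by
    rw [inner_sub_right] at hzero
    rw [← hφt]
    linear_combination -hzero
  have hcs : ‖(inner ℂ φ ((E.orthogonalProjectionOnto t : BigSpace 𝓗 q n m)) : ℂ)‖
      ≤ ‖φ‖ * ‖(E.orthogonalProjectionOnto t : BigSpace 𝓗 q n m)‖ := norm_inner_le_norm _ _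
  rw [hPt] at hcs
  simp only [norm_one] at hcs
  rw [projL_apply, div_le_iff₀ hε1]
  have h1 : (0:ℝ) ≤ ‖φ‖ := norm_nonneg _
  have h2 : (0:ℝ) ≤ ‖(E.orthogonalProjectionOnto t : BigSpace 𝓗 q n m)‖ := norm_nonneg _
  nlinarith [sq_nonneg (‖(E.orthogonalProjectionOnto t : BigSpace 𝓗 q n m)‖)]
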